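/- Every finite uniquely atomistic lattice is modular. -/
import Mathlib


/-- Every finite uniquely atomistic lattice is modular: for all `x y z`,
`x ≤ z` implies `x ⊔ (y ⊓ z) = (x ⊔ y) ⊓ z`. -/
theorem modular_of_uniquelyAtomistic
    {α : Type*} [Lattice α] [OrderBot α] [Fintype α]
    (hua : ∀ x : α, ∃! S : Finset α, (∀ a ∈ S, IsAtom a) ∧ x = S.sup id) :
    ∀ x y z : α, x ≤ z → x ⊔ (y ⊓ z) = (x ⊔ y) ⊓ z := by
  classical
  obtain ⟨A, hA⟩ : ∃ A : α → Finset α, ∀ x, ((∀ a ∈ A x, IsAtom a) ∧ x = (A x).sup id) ∧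
      ∀ S : Finset α, ((∀ a ∈ S, IsAtom a) ∧ x = S.sup id) → S = A x := by
    choose A h1 h2 using hua
    exact ⟨A, fun x => ⟨h1 x, h2 x⟩⟩
  have hatom : ∀ x, ∀ a ∈ A x, IsAtom a := fun x => (hA x).1.1
  have hsup : ∀ x, x = (A x).sup id := fun x => (hA x).1.2
  have huniq : ∀ x S, (∀ a ∈ S, IsAtom a) → x = S.sup id → S = A x :=
    fun x S h1 h2 => (hA x).2 S ⟨h1, h2⟩
  have hjoin : ∀ x y, A (x ⊔ y) = A x ∪ A y := by
    intro x y
    refine (huniq _ _ ?_ ?_).symm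
    · intro a ha; rcases Finset.mem_union.mp ha with h | h
      exacts [hatom x a h, hatom y a h]
    · rw [Finset.sup_union, ← hsup, ← hsup]
  have hmem_le : ∀ x, ∀ a ∈ A x, a ≤ x := by
    intro x a ha; rw [hsup x]; exact Finset.le_sup (f := id) ha
  have hatom_mem : ∀ (a x : α), IsAtom a → a ≤ x → a ∈ A x := by
    intro a x h hale
    have hAa : A a = {a} := (huniq a {a} (by simpa using h) (by simp)).symm
    have hx : A x = A a ∪ A x := by rw [← hjoin, sup_eq_right.mpr hale]
    rw [hx, hAa]; simp
  have hsub : ∀ x y : α, x ≤ y → A x ⊆ A y := by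
    intro x y hxy a ha
    exact hatom_mem a y (hatom x a ha) (le_trans (hmem_le x a ha) hxy)
  have hinf : ∀ x y : α, x ⊓ y = (A x ∩ A y).sup id := by
    intro x y
    apply le_antisymm
    · conv_lhs => rw [hsup (x ⊓ y)]
      apply Finset.sup_le
      intro a ha
      apply Finset.le_sup (f := id)
      exact Finset.mem_inter.mpr ⟨hatom_mem a x (hatom _ a ha) ((hmem_le _ a ha).trans inf_le_left),
        hatom_mem a y (hatom _ a ha) ((hmem_le _ a ha).trans inf_le_right)⟩
    · apply Finset.sup_le
      intro a ha
      rcases Finset.mem_inter.mp ha with ⟨h1, h2⟩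
      exact le_inf (hmem_le x a h1) (hmem_le y a h2)
  intro x y z hxz
  have e1 : x ⊔ (y ⊓ z) = (A x ∪ (A y ∩ A z)).sup id := by
    rw [Finset.sup_union, ← hsup, ← hinf]
  have e2 : (x ⊔ y) ⊓ z = ((A x ∪ A y) ∩ A z).sup id := by
    rw [hinf (x ⊔ y) z, hjoin]
  rw [e1, e2]
  congr 1
  ext a
  have hxza := hsub x z hxz
  simp only [Finset.mem_union, Finset.mem_inter]
  constructor
  · rintro (h | ⟨h1, h2⟩)
    · exact ⟨Or.inl h, hxza h⟩
    · exact ⟨Or.inr h1, h2⟩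
  · rintro ⟨h | h, hz⟩
    exacts [Or.inl h, Or.inr ⟨h, hz⟩]
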